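/- Let d ≥ 1, let X ⊆ ℝ^d be a measurable set contained in the closed ball of radius D > 0 centered at a point x ∈ ℝ^d, and let μ be a probability measure on ℝ^d with μ(X) = 1 such that μ(A) ≥ f_min · λ(A ∩ X) for every measurable A, for some f_min > 0 (density bounded away from zero on X). Suppose moreover there exist c > 0 and t₀ > 0 such that λ(B̄(x,t) ∩ X) ≥ c t^d for all t ∈ (0, t₀]. Then there exists a constant β > 0 such that for every n ≥ 1, if X_1, …, X_n are i.i.d. with law μ, then E[(min_{1≤j≤n} ‖X_j − x‖)^d] ≤ β/n. -/

import Mathlib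

open MeasureTheory ProbabilityTheory

lemma helper_lintegral_exp {b : ℝ} (hb : 0 < b) :
    ∫⁻ s in Set.Ioi (0:ℝ), ENNReal.ofReal (Real.exp (-(b * s))) = ENNReal.ofReal (1 / b) := by
  simp_rw [← neg_mul]
  rw [← MeasureTheory.ofReal_integral_eq_lintegral_ofReal (exp_neg_integrableOn_Ioi 0 hb)
      (Filter.Eventually.of_forall fun s => (Real.exp_pos _).le)]
  congr 1
  have h := MeasureTheory.integral_comp_mul_left_Ioi (fun x => Real.exp (-x)) 0 hb
  simp only [mul_zero, integral_exp_neg_Ioi, neg_zero, Real.exp_zero, smul_eq_mul,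
    mul_one, ← neg_mul] at h
  rw [h, one_div]

lemma helper_one_sub_le {q : ℝ} (hq : 0 ≤ q) :
    (1 : ENNReal) - ENNReal.ofReal q ≤ ENNReal.ofReal (Real.exp (-q)) := by
  rw [← ENNReal.ofReal_one, ← ENNReal.ofReal_sub _ hq]
  exact ENNReal.ofReal_le_ofReal (by linarith [Real.add_one_le_exp (-q)])

lemma helper_exp_le {q : ℝ} (hq : 0 < q) : Real.exp (-q) ≤ 1 / q := by
  rw [Real.exp_neg, one_div]
  exact inv_anti₀ hq (by linarith [Real.add_one_le_exp q])

/-- Order statistics bound: the expected `d`-th power of the minimum distance from `x`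
to `n` i.i.d. samples with law `μ` is at most `β / n`. -/
theorem min_dist_pow_expectation_le (d : ℕ) (hd : 1 ≤ d)
    (X : Set (EuclideanSpace ℝ (Fin d))) (hX : MeasurableSet X)
    (x : EuclideanSpace ℝ (Fin d)) (D : ℝ) (hD : 0 < D)
    (hXD : X ⊆ Metric.closedBall x D)
    (μ : Measure (EuclideanSpace ℝ (Fin d))) (hμ : IsProbabilityMeasure μ)
    (hμX : μ X = 1)
    (fmin : ℝ) (hfmin : 0 < fmin)
    (hlower : ∀ A : Set (EuclideanSpace ℝ (Fin d)), MeasurableSet A →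
      ENNReal.ofReal fmin * volume (A ∩ X) ≤ μ A)
    (c t₀ : ℝ) (hc : 0 < c) (ht₀ : 0 < t₀)
    (hball : ∀ t ∈ Set.Ioc (0:ℝ) t₀,
      ENNReal.ofReal (c * t ^ d) ≤ volume (Metric.closedBall x t ∩ X)) :
    ∃ β : ℝ, 0 < β ∧ ∀ n : ℕ, 1 ≤ n →
      ∀ (Ω : Type) (mΩ : MeasurableSpace Ω) (P : Measure Ω),
        IsProbabilityMeasure P →
        ∀ Y : Fin n → Ω → EuclideanSpace ℝ (Fin d),
          (∀ j, Measurable (Y j)) →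
          iIndepFun Y P →
          (∀ j, Measure.map (Y j) P = μ) →
          ∫⁻ ω, ENNReal.ofReal ((⨅ j : Fin n, ‖Y j ω - x‖) ^ d) ∂P ≤
            ENNReal.ofReal (β / n) := by
  set a : ℝ := fmin * c with ha_def
  have ha : 0 < a := mul_pos hfmin hc
  have ht₀d : (0:ℝ) < t₀ ^ d := pow_pos ht₀ d
  refine ⟨1 / a + D ^ d / (a * t₀ ^ d), by positivity, ?_⟩
  intro n hn Ω mΩ P hP Y hYm hYi hYlaw
  haveI := hP
  haveI : Nonempty (Fin n) := ⟨⟨0, hn⟩⟩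
  have hn0 : (0:ℝ) < (n:ℝ) := by exact_mod_cast Nat.lt_of_lt_of_le Nat.zero_lt_one hn
  have hna : (0:ℝ) < (n:ℝ) * a := mul_pos hn0 ha
  -- the min-distance function
  set f : Ω → ℝ := fun ω => (⨅ j : Fin n, ‖Y j ω - x‖) ^ d with hf_def
  have hinf_nn : ∀ ω, 0 ≤ ⨅ j : Fin n, ‖Y j ω - x‖ := fun ω =>
    le_ciInf fun j => norm_nonneg _
  have hfnn : ∀ ω, 0 ≤ f ω := fun ω => pow_nonneg (hinf_nn ω) d
  have hbdd : ∀ ω, BddBelow (Set.range fun j : Fin n => ‖Y j ω - x‖) := fun ω =>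
    ⟨0, fun y ⟨j, hj⟩ => hj ▸ norm_nonneg _⟩
  have hfm : Measurable f := by
    apply Measurable.pow_const
    exact Measurable.iInf fun j => ((hYm j).sub measurable_const).norm
  -- claim A: the main tail bound
  have claimA : ∀ s : ℝ, 0 < s →
      P {ω | s < f ω} ≤ ENNReal.ofReal (Real.exp (-((n:ℝ) * a * min s (t₀ ^ d)))) := by
    intro s hs
    set u : ℝ := s ^ ((d:ℝ)⁻¹) with hu_def
    have hu0 : 0 < u := Real.rpow_pos_of_pos hs _
    set t : ℝ := min u t₀ with ht_def
    have ht0 : 0 < t := lt_min hu0 ht₀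
    have htt₀ : t ≤ t₀ := min_le_right _ _
    have hdne : (d:ℝ) ≠ 0 := by exact_mod_cast Nat.one_le_iff_ne_zero.mp hd
    have hud : u ^ d = s := by
      rw [hu_def, ← Real.rpow_natCast (s ^ ((d:ℝ)⁻¹)) d, ← Real.rpow_mul hs.le,
        inv_mul_cancel₀ hdne, Real.rpow_one]
    have htd : t ^ d = min s (t₀ ^ d) := by
      rcases le_total u t₀ with h | h
      · rw [ht_def, min_eq_left h, hud, min_eq_left]
        rw [← hud]; exact pow_le_pow_left₀ hu0.le h d
      · rw [ht_def, min_eq_right h, min_eq_right]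
        rw [← hud]; exact pow_le_pow_left₀ ht₀.le h d
    have hevent : {ω | s < f ω} ⊆ ⋂ j, Y j ⁻¹' (Metric.closedBall x t)ᶜ := by
      intro ω hω
      simp only [Set.mem_iInter, Set.mem_preimage, Set.mem_compl_iff,
        Metric.mem_closedBall, not_le]
      intro j
      by_contra hcon
      push_neg at hcon
      have h1 : (⨅ j' : Fin n, ‖Y j' ω - x‖) ≤ t := by
        refine le_trans (ciInf_le (hbdd ω) j) ?_
        rwa [← dist_eq_norm]
      have h2 : f ω ≤ t ^ d := pow_le_pow_left₀ (hinf_nn ω) h1 d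
      rw [htd] at h2
      exact absurd (lt_of_lt_of_le hω (h2.trans (min_le_left _ _))) (lt_irrefl s)
    have hfac : ∀ j : Fin n, P (Y j ⁻¹' (Metric.closedBall x t)ᶜ) ≤
        ENNReal.ofReal (Real.exp (-(a * t ^ d))) := by
      intro j
      have hmap : P (Y j ⁻¹' (Metric.closedBall x t)ᶜ) = μ (Metric.closedBall x t)ᶜ := by
        rw [← hYlaw j, Measure.map_apply (hYm j) measurableSet_closedBall.compl]
      rw [hmap, prob_compl_eq_one_sub measurableSet_closedBall]
      have h1 : ENNReal.ofReal (a * t ^ d) ≤ μ (Metric.closedBall x t) := by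
        calc ENNReal.ofReal (a * t ^ d)
            = ENNReal.ofReal fmin * ENNReal.ofReal (c * t ^ d) := by
              rw [← ENNReal.ofReal_mul hfmin.le, ha_def, mul_assoc]
          _ ≤ ENNReal.ofReal fmin * volume (Metric.closedBall x t ∩ X) :=
              mul_le_mul_right (hball t ⟨ht0, htt₀⟩) _
          _ ≤ μ (Metric.closedBall x t) :=
              hlower _ measurableSet_closedBall
      calc (1:ENNReal) - μ (Metric.closedBall x t)
          ≤ 1 - ENNReal.ofReal (a * t ^ d) := tsub_le_tsub_left h1 1
        _ ≤ ENNReal.ofReal (Real.exp (-(a * t ^ d))) :=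
            helper_one_sub_le (by positivity)
    calc P {ω | s < f ω}
        ≤ P (⋂ j, Y j ⁻¹' (Metric.closedBall x t)ᶜ) := measure_mono hevent
      _ = ∏ j : Fin n, P (Y j ⁻¹' (Metric.closedBall x t)ᶜ) :=
          hYi.meas_iInter fun j =>
            ⟨(Metric.closedBall x t)ᶜ, measurableSet_closedBall.compl, rfl⟩
      _ ≤ ∏ _j : Fin n, ENNReal.ofReal (Real.exp (-(a * t ^ d))) :=
          Finset.prod_le_prod' fun j _ => hfac j
      _ = ENNReal.ofReal (Real.exp (-(a * t ^ d))) ^ n := by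
          rw [Finset.prod_const, Finset.card_univ, Fintype.card_fin]
      _ = ENNReal.ofReal (Real.exp (-((n:ℝ) * a * min s (t₀ ^ d)))) := by
          rw [← ENNReal.ofReal_pow (Real.exp_pos _).le, ← Real.exp_nat_mul, htd]
          ring_nf
  -- claim B: beyond D^d the tail vanishes
  have claimB : ∀ s : ℝ, D ^ d < s → P {ω | s < f ω} = 0 := by
    intro s hsD
    have hj : ∀ j : Fin n, ∀ᵐ ω ∂P, Y j ω ∈ X := by
      intro j
      have h1 : P (Y j ⁻¹' X) = 1 := by
        rw [← Measure.map_apply (hYm j) hX, hYlaw j]; exact hμX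
      have h0 : P ((Y j ⁻¹' X)ᶜ) = 0 := by
        rw [prob_compl_eq_one_sub ((hYm j) hX), h1, tsub_self]
      exact (MeasureTheory.measure_eq_zero_iff_ae_notMem.mp h0).mono fun ω h =>
        not_not.mp h
    have hae : ∀ᵐ ω ∂P, f ω ≤ D ^ d := by
      filter_upwards [ae_all_iff.mpr hj] with ω hω
      have hinfD : (⨅ j : Fin n, ‖Y j ω - x‖) ≤ D := by
        obtain ⟨j⟩ := (inferInstance : Nonempty (Fin n))
        refine le_trans (ciInf_le (hbdd ω) j) ?_
        have := hXD (hω j)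
        rwa [Metric.mem_closedBall, dist_eq_norm] at this
      exact pow_le_pow_left₀ (hinf_nn ω) hinfD d
    refine MeasureTheory.measure_eq_zero_iff_ae_notMem.mpr ?_
    filter_upwards [hae] with ω h
    exact fun hmem => absurd hmem (not_lt.mpr (h.trans hsD.le))
  -- layer cake
  have hlc := MeasureTheory.lintegral_eq_lintegral_meas_lt P
    (Filter.Eventually.of_forall hfnn) hfm.aemeasurable
  rw [hf_def] at hlc
  rw [hlc]
  -- the dominating function
  set C : ENNReal := ENNReal.ofReal (Real.exp (-((n:ℝ) * a * t₀ ^ d))) with hC_def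
  set G : ℝ → ENNReal := fun s =>
    ENNReal.ofReal (Real.exp (-((n:ℝ) * a * s))) +
      (Set.Ioc (t₀ ^ d) (D ^ d)).indicator (fun _ => C) s with hG_def
  have hbound : ∀ s ∈ Set.Ioi (0:ℝ), P {ω | s < f ω} ≤ G s := by
    intro s hs
    rcases le_or_gt s (t₀ ^ d) with h1 | h1
    · calc P {ω | s < f ω}
          ≤ ENNReal.ofReal (Real.exp (-((n:ℝ) * a * min s (t₀ ^ d)))) := claimA s hs
        _ = ENNReal.ofReal (Real.exp (-((n:ℝ) * a * s))) := by rw [min_eq_left h1]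
        _ ≤ G s := le_self_add
    · rcases le_or_gt s (D ^ d) with h2 | h2
      · calc P {ω | s < f ω}
            ≤ ENNReal.ofReal (Real.exp (-((n:ℝ) * a * min s (t₀ ^ d)))) := claimA s hs
          _ = C := by rw [min_eq_right h1.le]
          _ = (Set.Ioc (t₀ ^ d) (D ^ d)).indicator (fun _ => C) s := by
              rw [Set.indicator_of_mem (Set.mem_Ioc.mpr ⟨h1, h2⟩)]
          _ ≤ G s := le_add_self
      · rw [claimB s h2]; exact zero_le
  calc ∫⁻ s in Set.Ioi (0:ℝ), P {ω | s < f ω}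
      ≤ ∫⁻ s in Set.Ioi (0:ℝ), G s :=
        setLIntegral_mono' measurableSet_Ioi hbound
    _ = (∫⁻ s in Set.Ioi (0:ℝ), ENNReal.ofReal (Real.exp (-((n:ℝ) * a * s)))) +
        ∫⁻ s in Set.Ioi (0:ℝ),
          (Set.Ioc (t₀ ^ d) (D ^ d)).indicator (fun _ => C) s := by
        rw [hG_def]
        exact lintegral_add_left
          (((measurable_const.mul measurable_id).neg.exp).ennreal_ofReal) _
    _ ≤ ENNReal.ofReal (1 / ((n:ℝ) * a)) + C * ENNReal.ofReal (D ^ d) := by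
        gcongr
        · exact le_of_eq (helper_lintegral_exp hna)
        · rw [lintegral_indicator measurableSet_Ioc, setLIntegral_const]
          refine mul_le_mul_right ?_ C
          rw [Measure.restrict_apply measurableSet_Ioc]
          refine le_trans (measure_mono (Set.inter_subset_left)) ?_
          rw [Real.volume_Ioc]
          exact ENNReal.ofReal_le_ofReal (by linarith)
    _ ≤ ENNReal.ofReal (1 / ((n:ℝ) * a)) +
        ENNReal.ofReal (1 / ((n:ℝ) * a * t₀ ^ d)) * ENNReal.ofReal (D ^ d) := by
        gcongr
        exact ENNReal.ofReal_le_ofReal (helper_exp_le (by positivity))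
    _ ≤ ENNReal.ofReal ((1 / a + D ^ d / (a * t₀ ^ d)) / n) := by
        rw [← ENNReal.ofReal_mul (by positivity), ← ENNReal.ofReal_add (by positivity)
          (by positivity)]
        refine ENNReal.ofReal_le_ofReal (le_of_eq ?_)
        rw [div_add_div _ _ (by positivity : a ≠ 0) (by positivity : a * t₀ ^ d ≠ 0),
          div_div]
        field_simp
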